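/- Let a, b ∈ ℝᴺ be vectors with nonnegative entries, let p > 0, and let M̃ be an N×N contraction (‖M̃‖ ≤ 1) such that M̃ · diag(a) · M̃† = p · diag(b), where diag(a) is the diagonal matrix with diagonal entries a₁,…,a_N. Then p·b is submajorized by a, i.e., p·b ≺_w a. -/

import Mathlib

open Matrix

/-- `M` is a contraction: its operator norm (as an operator on `EuclideanSpace ℂ (Fin n)`,
i.e. the l2 operator norm) is at most 1. -/
def IsContraction {n : ℕ} (M : Matrix (Fin n) (Fin n) ℂ) : Prop :=
  ‖Matrix.toEuclideanCLM (𝕜 := ℂ) M‖ ≤ 1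

/-- The decreasing rearrangement `x↓` of a vector `x ∈ ℝᴺ`. -/
noncomputable def decRearrange {N : ℕ} (x : Fin N → ℝ) : Fin N → ℝ :=
  fun i => x (Tuple.sort x i.rev)

/-- `∑_{i=1}^{k} x↓_i`, the sum of the `k` largest entries of `x` (0-indexed: indices `< k`). -/
noncomputable def topSum {N : ℕ} (x : Fin N → ℝ) (k : ℕ) : ℝ :=
  ∑ i ∈ Finset.univ.filter (fun i : Fin N => (i : ℕ) < k), decRearrange x i

/-- `∑_{i=l+1}^{N} x↓_i` (1-indexed), i.e. the sum of `x↓_i` over 0-indexed indices `i ≥ l`. -/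
noncomputable def botSum {N : ℕ} (x : Fin N → ℝ) (l : ℕ) : ℝ :=
  ∑ i ∈ Finset.univ.filter (fun i : Fin N => l ≤ (i : ℕ)), decRearrange x i

/-- `x ≺ y` : `x` is majorized by `y`. -/
noncomputable def IsMajorizedBy {N : ℕ} (x y : Fin N → ℝ) : Prop :=
  (∀ k : ℕ, topSum x k ≤ topSum y k) ∧ (∑ i, x i = ∑ i, y i)

/-- `x ≺_w y` : `x` is submajorized (weakly majorized from below) by `y`. -/
noncomputable def IsSubmajorizedBy {N : ℕ} (x y : Fin N → ℝ) : Prop :=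
  ∀ k : ℕ, topSum x k ≤ topSum y k

/-- `x ≺^w y` : `x` is supermajorized (weakly majorized from above) by `y`:
`∑_{i=l}^{N} x↓_i ≥ ∑_{i=l}^{N} y↓_i` for all `l`. -/
noncomputable def IsSupermajorizedBy {N : ℕ} (x y : Fin N → ℝ) : Prop :=
  ∀ l : ℕ, botSum y l ≤ botSum x l

/-- If `a, b ≥ 0`, `p > 0` and a contraction `M̃` satisfies `M̃ diag(a) M̃† = p diag(b)`, then
`p b ≺_w a`. -/
noncomputable def rearrPerm {N : ℕ} (x : Fin N → ℝ) : Equiv.Perm (Fin N) :=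
  Fin.revPerm.trans (Tuple.sort x)

lemma decRearrange_eq_perm {N : ℕ} (x : Fin N → ℝ) (i : Fin N) :
    decRearrange x i = x (rearrPerm x i) := rfl

lemma decRearrange_anti {N : ℕ} (x : Fin N → ℝ) {i j : Fin N} (hij : i ≤ j) :
    decRearrange x j ≤ decRearrange x i :=
  Tuple.monotone_sort x (Fin.rev_le_rev.mpr hij)

lemma card_filter_lt {N k : ℕ} (hk : k ≤ N) :
    (Finset.univ.filter (fun i : Fin N => (i:ℕ) < k)).card = k := by
  have : (Finset.univ.filter (fun i : Fin N => (i:ℕ) < k)) =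
      Finset.map (Fin.castLEEmb hk) Finset.univ := by
    ext i
    simp [Finset.mem_map]
    constructor
    · intro hi; exact ⟨⟨i, hi⟩, by simp [Fin.castLEEmb]⟩
    · rintro ⟨j, rfl⟩; simp [Fin.castLEEmb]
  simp [this]

lemma sum_mul_le_topSum {N : ℕ} (a : Fin N → ℝ) (ha : ∀ i, 0 ≤ a i)
    (c : Fin N → ℝ) (hc0 : ∀ i, 0 ≤ c i) (hc1 : ∀ i, c i ≤ 1)
    (k : ℕ) (hck : ∑ i, c i ≤ k) :
    ∑ i, c i * a i ≤ topSum a k := by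
  -- reindex by the rearranging permutation
  set π := rearrPerm a with hπ
  have hre : ∑ i, c i * a i = ∑ i, c (π i) * decRearrange a i := by
    rw [← Equiv.sum_comp π (fun i => c i * a i)]
    simp [decRearrange_eq_perm, hπ]
  set d : Fin N → ℝ := fun i => c (π i) with hd
  have hd0 : ∀ i, 0 ≤ d i := fun i => hc0 _
  have hd1 : ∀ i, d i ≤ 1 := fun i => hc1 _
  have hdk : ∑ i, d i ≤ k := by
    rw [hd]; rw [Equiv.sum_comp π c]; exact hck
  have hA0 : ∀ i, 0 ≤ decRearrange a i := fun i => ha _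
  rw [hre]
  rcases Nat.lt_or_ge k (N + 1) with hkN | hkN
  · -- k ≤ N
    have hkN : k ≤ N := Nat.lt_succ_iff.mp hkN
    rcases Nat.eq_zero_or_pos k with rfl | hk0
    · have hz : ∀ i, d i = 0 := by
        intro i
        have h1 : ∑ i, d i ≤ 0 := by simpa using hdk
        have h2 : (0:ℝ) ≤ ∑ i, d i := Finset.sum_nonneg (fun i _ => hd0 i)
        exact (Finset.sum_eq_zero_iff_of_nonneg (fun i _ => hd0 i)).mp (le_antisymm h1 h2) i
          (Finset.mem_univ i)
      have : ∑ i, d i * decRearrange a i = 0 := by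
        apply Finset.sum_eq_zero; intro i _; rw [hz i, zero_mul]
      rw [show (∑ i, c (π i) * decRearrange a i) = ∑ i, d i * decRearrange a i from rfl, this]
      simp [topSum]
    · -- 1 ≤ k ≤ N
      have hkm : k - 1 < N := by omega
      set km : Fin N := ⟨k - 1, hkm⟩ with hkm'
      set t := decRearrange a km with ht
      have ht0 : 0 ≤ t := hA0 km
      have step1 : ∀ i, d i * decRearrange a i ≤ max (decRearrange a i - t) 0 + d i * t := by
        intro i
        have : d i * decRearrange a i = d i * (decRearrange a i - t) + d i * t := by ring
        rw [this]
        gcongr ?_ + _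
        rcases le_or_gt t (decRearrange a i) with hle | hlt
        · calc d i * (decRearrange a i - t) ≤ 1 * (decRearrange a i - t) := by
                apply mul_le_mul_of_nonneg_right (hd1 i) (by linarith)
          _ = decRearrange a i - t := one_mul _
          _ ≤ max (decRearrange a i - t) 0 := le_max_left _ _
        · calc d i * (decRearrange a i - t) ≤ 0 := mul_nonpos_of_nonneg_of_nonpos (hd0 i) (by linarith)
          _ ≤ max (decRearrange a i - t) 0 := le_max_right _ _
      calc ∑ i, d i * decRearrange a i
          ≤ ∑ i, (max (decRearrange a i - t) 0 + d i * t) :=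
            Finset.sum_le_sum (fun i _ => step1 i)
        _ = ∑ i, max (decRearrange a i - t) 0 + (∑ i, d i) * t := by
            rw [Finset.sum_add_distrib, Finset.sum_mul]
        _ ≤ ∑ i, max (decRearrange a i - t) 0 + k * t := by
            gcongr
        _ = topSum a k := by
            have hsplit : ∑ i, max (decRearrange a i - t) 0
                = ∑ i ∈ Finset.univ.filter (fun i : Fin N => (i:ℕ) < k), (decRearrange a i - t) := by
              rw [← Finset.sum_filter_add_sum_filter_not Finset.univ (fun i : Fin N => (i:ℕ) < k)
                (fun i => max (decRearrange a i - t) 0)]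
              have h1 : ∀ i ∈ Finset.univ.filter (fun i : Fin N => (i:ℕ) < k),
                  max (decRearrange a i - t) 0 = decRearrange a i - t := by
                intro i hi
                simp only [Finset.mem_filter] at hi
                have : i ≤ km := by
                  rw [hkm']; exact Fin.le_def.mpr (by simp; omega)
                have := decRearrange_anti a this
                exact max_eq_left (by linarith)
              have h2 : ∀ i ∈ Finset.univ.filter (fun i : Fin N => ¬ (i:ℕ) < k),
                  max (decRearrange a i - t) 0 = 0 := by
                intro i hi
                simp only [Finset.mem_filter] at hi
                have : km ≤ i := by
                  rw [hkm']; exact Fin.le_def.mpr (by simp; omega)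
                have := decRearrange_anti a this
                exact max_eq_right (by linarith)
              rw [Finset.sum_congr rfl h1, Finset.sum_congr rfl h2, Finset.sum_const_zero, add_zero]
            rw [hsplit, Finset.sum_sub_distrib, Finset.sum_const, card_filter_lt hkN, topSum]
            ring
  · -- k > N : topSum a k = total sum
    have hfull : (Finset.univ.filter (fun i : Fin N => (i:ℕ) < k)) = Finset.univ := by
      ext i; simp; omega
    rw [topSum, hfull]
    apply Finset.sum_le_sum
    intro i _
    calc d i * decRearrange a i ≤ 1 * decRearrange a i :=
          mul_le_mul_of_nonneg_right (hd1 i) (hA0 i)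
      _ = decRearrange a i := one_mul _

lemma col_sum_le {N : ℕ} (M : Matrix (Fin N) (Fin N) ℂ) (hM : IsContraction M) (i : Fin N) :
    ∑ j, ‖M j i‖^2 ≤ 1 := by
  set T := Matrix.toEuclideanCLM (𝕜 := ℂ) M with hT
  set v : EuclideanSpace ℂ (Fin N) := (WithLp.equiv 2 _).symm (Pi.single i 1) with hv'
  have hv : ‖T v‖ ≤ ‖v‖ := by
    calc ‖T v‖ ≤ ‖T‖ * ‖v‖ := T.le_opNorm v
    _ ≤ 1 * ‖v‖ := by gcongr; exact hM
    _ = ‖v‖ := one_mul _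
  have h1 : ‖v‖ = 1 := by
    rw [EuclideanSpace.norm_eq]
    have : ∀ j, ‖(WithLp.equiv 2 (Fin N → ℂ)).symm (Pi.single i 1) j‖^2
        = if j = i then 1 else 0 := by
      intro j
      by_cases hj : j = i <;> simp [hj, Pi.single_apply]
    rw [Finset.sum_congr rfl (fun j _ => this j)]
    simp
  have h2 : T v = (WithLp.equiv 2 _).symm (fun j => M j i) := by
    rw [hv', hT, WithLp.equiv_symm_apply, Matrix.toEuclideanCLM_toLp, Matrix.mulVec_single]
    simp; rfl
  have h3 : ‖T v‖^2 = ∑ j, ‖M j i‖^2 := by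
    rw [h2, EuclideanSpace.norm_eq, Real.sq_sqrt (Finset.sum_nonneg fun j _ => sq_nonneg _)]
    rfl
  rw [h1] at hv
  calc ∑ j, ‖M j i‖^2 = ‖T v‖^2 := h3.symm
  _ ≤ 1^2 := pow_le_pow_left₀ (norm_nonneg _) hv 2
  _ = 1 := one_pow 2

set_option synthInstance.maxHeartbeats 1000000 in
lemma contraction_conjTranspose {N : ℕ} (M : Matrix (Fin N) (Fin N) ℂ) (hM : IsContraction M) :
    IsContraction Mᴴ := by
  unfold IsContraction at *
  rw [show (Mᴴ) = star M from rfl, map_star, ContinuousLinearMap.star_eq_adjoint,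
    LinearIsometryEquiv.norm_map]
  exact hM

lemma row_sum_le {N : ℕ} (M : Matrix (Fin N) (Fin N) ℂ) (hM : IsContraction M) (j : Fin N) :
    ∑ i, ‖M j i‖^2 ≤ 1 := by
  have := col_sum_le Mᴴ (contraction_conjTranspose M hM) j
  simpa [Matrix.conjTranspose_apply] using this

lemma diag_entries {N : ℕ} (a b : Fin N → ℝ) (p : ℝ)
    (M : Matrix (Fin N) (Fin N) ℂ)
    (h : M * Matrix.diagonal (fun i => (a i : ℂ)) * Mᴴ
        = p • Matrix.diagonal (fun i => (b i : ℂ))) (j : Fin N) :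
    p * b j = ∑ i, ‖M j i‖^2 * a i := by
  have h1 := congrFun (congrFun h j) j
  rw [Matrix.mul_apply] at h1
  simp only [Matrix.mul_diagonal, Matrix.conjTranspose_apply,
    Matrix.smul_apply, Matrix.diagonal_apply_eq, smul_eq_mul] at h1
  have h2 : ∀ i, M j i * (a i : ℂ) * star (M j i) = ((‖M j i‖^2 * a i : ℝ) : ℂ) := by
    intro i
    rw [mul_comm (M j i) _, mul_assoc, Complex.star_def, Complex.mul_conj']
    push_cast
    ring
  rw [Finset.sum_congr rfl (fun i _ => h2 i), ← Complex.ofReal_sum, Complex.real_smul,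
    ← Complex.ofReal_mul] at h1
  exact (Complex.ofReal_injective h1).symm

theorem submajorized_of_contraction_diag {N : ℕ} (a b : Fin N → ℝ)
    (ha : ∀ i, 0 ≤ a i) (hb : ∀ i, 0 ≤ b i) (p : ℝ) (hp : 0 < p)
    (M : Matrix (Fin N) (Fin N) ℂ) (hM : IsContraction M)
    (h : M * Matrix.diagonal (fun i => (a i : ℂ)) * Mᴴ
        = p • Matrix.diagonal (fun i => (b i : ℂ))) :
    IsSubmajorizedBy (fun i => p * b i) a := by
  intro k
  set x : Fin N → ℝ := fun i => p * b i with hx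
  set F := Finset.univ.filter (fun i : Fin N => (i:ℕ) < k) with hF
  set S := F.image (rearrPerm x) with hS
  have hScard : S.card ≤ k := by
    calc S.card ≤ F.card := Finset.card_image_le
    _ ≤ (Finset.range k).card := by
        refine Finset.card_le_card_of_injOn (fun i => (i:ℕ)) (fun i hi => ?_)
          (fun i _ j _ hij => Fin.val_injective hij)
        simp [hF] at hi
        simp [hi]
    _ = k := Finset.card_range k
  have htop : topSum x k = ∑ j ∈ S, x j := by
    rw [hS, Finset.sum_image (fun i _ j _ hij => (rearrPerm x).injective hij)]
    rfl
  set c : Fin N → ℝ := fun i => ∑ j ∈ S, ‖M j i‖^2 with hc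
  have hc0 : ∀ i, 0 ≤ c i := fun i => Finset.sum_nonneg (fun j _ => sq_nonneg _)
  have hc1 : ∀ i, c i ≤ 1 := by
    intro i
    calc c i ≤ ∑ j, ‖M j i‖^2 :=
          Finset.sum_le_sum_of_subset_of_nonneg (Finset.subset_univ S)
            (fun j _ _ => sq_nonneg _)
    _ ≤ 1 := col_sum_le M hM i
  have hck : ∑ i, c i ≤ k := by
    rw [hc]
    rw [Finset.sum_comm]
    calc ∑ j ∈ S, ∑ i, ‖M j i‖^2 ≤ ∑ j ∈ S, 1 :=
          Finset.sum_le_sum (fun j _ => row_sum_le M hM j)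
    _ = S.card := by simp
    _ ≤ k := by exact_mod_cast hScard
  have hval : ∑ j ∈ S, x j = ∑ i, c i * a i := by
    calc ∑ j ∈ S, x j = ∑ j ∈ S, ∑ i, ‖M j i‖^2 * a i := by
          exact Finset.sum_congr rfl (fun j _ => diag_entries a b p M h j)
    _ = ∑ i, ∑ j ∈ S, ‖M j i‖^2 * a i := Finset.sum_comm
    _ = ∑ i, c i * a i := by
          refine Finset.sum_congr rfl (fun i _ => ?_)
          rw [hc, Finset.sum_mul]
  rw [htop, hval]
  exact sum_mul_le_topSum a ha c hc0 hc1 k hck
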